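/- For every positive integer k, there exists N = N(k) such that every graph G containing a vertex v with at least N neighbours and at least N non-neighbours contains one of the following as an induced subgraph: S_k, the complement of S_k, Q_k, the complement of Q_k, the complete bipartite graph K_{k,k}, or the complement of K_{k,k}. Here S_k is a clique of size k plus k isolated vertices, and Q_k is the disjoint union of a star K_{1,k} and k isolated vertices. -/

import Mathlib

/-- `Sgraph k` : a clique of size `k` (left summand) plus `k` isolated vertices. -/
def Sgraph (k : ℕ) : SimpleGraph (Fin k ⊕ Fin k) :=
  SimpleGraph.fromRel (fun u v => u.isLeft = true ∧ v.isLeft = true)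

/-- `Qgraph k` : the disjoint union of a star `K_{1,k}` (centre `inl (inl ())`, leaves
`inl (inr i)`) and `k` isolated vertices (the right summand). -/
def Qgraph (k : ℕ) : SimpleGraph ((Unit ⊕ Fin k) ⊕ Fin k) :=
  SimpleGraph.fromRel
    (fun u v => u = Sum.inl (Sum.inl ()) ∧ ∃ i : Fin k, v = Sum.inl (Sum.inr i))

/-- From an embedding into the complement, get an embedding of the complement. -/
def embOfCompl {W V : Type} {H : SimpleGraph W} {G : SimpleGraph V}
    (e : H ↪g Gᶜ) : Hᶜ ↪g G where
  toFun := e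
  inj' := e.injective
  map_rel_iff' := by
    intro a b
    simp only [Function.Embedding.coeFn_mk, SimpleGraph.compl_adj]
    constructor
    · intro h
      refine ⟨fun hab => by subst hab; exact G.irrefl h, fun hH => ?_⟩
      exact (e.map_rel_iff.mpr hH).2 h
    · rintro ⟨hab, hH⟩
      by_contra hG
      exact hH (e.map_rel_iff.mp ⟨fun he => hab (e.injective he), hG⟩)

lemma ramsey_aux {V : Type} (G : SimpleGraph V) :
    ∀ (n a b : ℕ), a + b ≤ n → ∀ s : Finset V, (a + b).choose a ≤ s.card →
      (∃ t ⊆ s, t.card = a ∧ ∀ x ∈ t, ∀ y ∈ t, x ≠ y → G.Adj x y) ∨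
      (∃ t ⊆ s, t.card = b ∧ ∀ x ∈ t, ∀ y ∈ t, ¬ G.Adj x y) := by
  classical
  intro n
  induction n with
  | zero =>
    intro a b hab s hs
    have ha : a = 0 := by omega
    subst ha
    exact Or.inl ⟨∅, by simp, by simp, by simp⟩
  | succ n ih =>
    intro a b hab s hs
    match a, b with
    | 0, b => exact Or.inl ⟨∅, by simp, by simp, by simp⟩
    | a+1, 0 => exact Or.inr ⟨∅, by simp, by simp, by simp⟩
    | a+1, b+1 =>
      have hpos : 0 < s.card := lt_of_lt_of_le (Nat.choose_pos (by omega)) hs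
      obtain ⟨x, hx⟩ := Finset.card_pos.mp hpos
      set sN := (s.erase x).filter (fun y => G.Adj x y) with hsN
      set sM := (s.erase x).filter (fun y => ¬ G.Adj x y) with hsM
      have hcards : sN.card + sM.card = s.card - 1 := by
        rw [hsN, hsM, Finset.card_filter_add_card_filter_not,
          Finset.card_erase_of_mem hx]
      have hchoose : (a+1+(b+1)).choose (a+1)
          = (a+(b+1)).choose a + (a+1+b).choose (a+1) := by
        rw [show a+1+(b+1) = (a+(b+1))+1 from by omega, Nat.choose_succ_succ]
        congr 2
        omega
      have hsplit : (a+(b+1)).choose a ≤ sN.card ∨ (a+1+b).choose (a+1) ≤ sM.card := by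
        by_contra hcon
        push_neg at hcon
        omega
      have hNs : sN ⊆ s := (Finset.filter_subset _ _).trans (Finset.erase_subset _ _)
      have hMs : sM ⊆ s := (Finset.filter_subset _ _).trans (Finset.erase_subset _ _)
      rcases hsplit with h | h
      · rcases ih a (b+1) (by omega) sN h with ⟨t, hts, htc, htadj⟩ | ⟨t, hts, htc, htind⟩
        · left
          have hxt : x ∉ t := fun hxt =>
            (Finset.mem_erase.mp (Finset.mem_filter.mp (hts hxt)).1).1 rfl
          refine ⟨insert x t, ?_, ?_, ?_⟩
          · exact Finset.insert_subset hx (hts.trans hNs)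
          · rw [Finset.card_insert_of_notMem hxt, htc]
          · intro y hy z hz hyz
            rcases Finset.mem_insert.mp hy with hy' | hy' <;>
              rcases Finset.mem_insert.mp hz with hz' | hz'
            · exact absurd (hy'.trans hz'.symm) hyz
            · subst hy'; exact (Finset.mem_filter.mp (hts hz')).2
            · subst hz'; exact ((Finset.mem_filter.mp (hts hy')).2).symm
            · exact htadj y hy' z hz' hyz
        · exact Or.inr ⟨t, hts.trans hNs, htc, htind⟩
      · rcases ih (a+1) b (by omega) sM h with ⟨t, hts, htc, htadj⟩ | ⟨t, hts, htc, htind⟩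
        · exact Or.inl ⟨t, hts.trans hMs, htc, htadj⟩
        · right
          have hxt : x ∉ t := fun hxt =>
            (Finset.mem_erase.mp (Finset.mem_filter.mp (hts hxt)).1).1 rfl
          refine ⟨insert x t, ?_, ?_, ?_⟩
          · exact Finset.insert_subset hx (hts.trans hMs)
          · rw [Finset.card_insert_of_notMem hxt, htc]
          · intro y hy z hz
            rcases Finset.mem_insert.mp hy with hy' | hy' <;>
              rcases Finset.mem_insert.mp hz with hz' | hz'
            · subst hy'; subst hz'; exact G.irrefl
            · subst hy'; exact (Finset.mem_filter.mp (hts hz')).2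
            · subst hz'; exact fun hadj => (Finset.mem_filter.mp (hts hy')).2 hadj.symm
            · exact htind y hy' z hz' 

lemma bip_aux {V : Type} (G : SimpleGraph V) (k : ℕ) :
    ∀ (n a b : ℕ), a + b ≤ n → ∀ L R : Finset V, a + b ≤ L.card → k * 2^(a+b) ≤ R.card →
      (∃ L' R', L' ⊆ L ∧ R' ⊆ R ∧ L'.card = a ∧ k ≤ R'.card ∧
        ∀ x ∈ L', ∀ y ∈ R', G.Adj x y) ∨
      (∃ L' R', L' ⊆ L ∧ R' ⊆ R ∧ L'.card = b ∧ k ≤ R'.card ∧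
        ∀ x ∈ L', ∀ y ∈ R', ¬ G.Adj x y) := by
  classical
  intro n
  induction n with
  | zero =>
    intro a b hab L R hL hR
    have ha : a = 0 := by omega
    have hb : b = 0 := by omega
    subst ha; subst hb
    exact Or.inl ⟨∅, R, Finset.empty_subset _, Finset.Subset.refl _, rfl,
      by simpa using hR, by simp⟩
  | succ n ih =>
    intro a b hab L R hL hR
    have hk2 : ∀ c : ℕ, k ≤ k * 2^c := fun c => by
      calc k = k * 1 := (mul_one k).symm
        _ ≤ k * 2^c := Nat.mul_le_mul_left k Nat.one_le_two_pow
    match a, b with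
    | 0, b =>
      exact Or.inl ⟨∅, R, Finset.empty_subset _, Finset.Subset.refl _, rfl,
        le_trans (hk2 _) hR, by simp⟩
    | a+1, 0 =>
      exact Or.inr ⟨∅, R, Finset.empty_subset _, Finset.Subset.refl _, rfl,
        le_trans (hk2 _) hR, by simp⟩
    | a+1, b+1 =>
      have hpos : 0 < L.card := by omega
      obtain ⟨x, hx⟩ := Finset.card_pos.mp hpos
      set Ra := R.filter (fun y => G.Adj x y) with hRa
      set Rn := R.filter (fun y => ¬ G.Adj x y) with hRn
      have hcards : Ra.card + Rn.card = R.card := by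
        rw [hRa, hRn, Finset.card_filter_add_card_filter_not]
      have hpow : k * 2^(a+1+(b+1)) = k * 2^(a+(b+1)) + k * 2^(a+1+b) := by
        rw [show a+1+(b+1) = (a+(b+1))+1 from by omega,
          show a+1+b = a+(b+1) from by omega, pow_succ]
        ring
      have hsplit : k * 2^(a+(b+1)) ≤ Ra.card ∨ k * 2^(a+1+b) ≤ Rn.card := by
        by_contra hcon
        push_neg at hcon
        omega
      have hErc : a + 1 + b ≤ (L.erase x).card := by
        rw [Finset.card_erase_of_mem hx]; omega
      have hEr : L.erase x ⊆ L := Finset.erase_subset _ _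
      have hRaR : Ra ⊆ R := Finset.filter_subset _ _
      have hRnR : Rn ⊆ R := Finset.filter_subset _ _
      rcases hsplit with h | h
      · rcases ih a (b+1) (by omega) (L.erase x) Ra (by omega) h with
          ⟨L', R', h1, h2, h3, h4, h5⟩ | ⟨L', R', h1, h2, h3, h4, h5⟩
        · left
          have hxL' : x ∉ L' := fun hc => (Finset.mem_erase.mp (h1 hc)).1 rfl
          refine ⟨insert x L', R', Finset.insert_subset hx (h1.trans hEr),
            h2.trans hRaR, ?_, h4, ?_⟩
          · rw [Finset.card_insert_of_notMem hxL', h3]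
          · intro y hy z hz
            rcases Finset.mem_insert.mp hy with hy' | hy'
            · subst hy'; exact (Finset.mem_filter.mp (h2 hz)).2
            · exact h5 y hy' z hz
        · exact Or.inr ⟨L', R', h1.trans hEr, h2.trans hRaR, h3, h4, h5⟩
      · rcases ih (a+1) b (by omega) (L.erase x) Rn (by omega) h with
          ⟨L', R', h1, h2, h3, h4, h5⟩ | ⟨L', R', h1, h2, h3, h4, h5⟩
        · exact Or.inl ⟨L', R', h1.trans hEr, h2.trans hRnR, h3, h4, h5⟩
        · right
          have hxL' : x ∉ L' := fun hc => (Finset.mem_erase.mp (h1 hc)).1 rfl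
          refine ⟨insert x L', R', Finset.insert_subset hx (h1.trans hEr),
            h2.trans hRnR, ?_, h4, ?_⟩
          · rw [Finset.card_insert_of_notMem hxL', h3]
          · intro y hy z hz
            rcases Finset.mem_insert.mp hy with hy' | hy'
            · subst hy'; exact (Finset.mem_filter.mp (h2 hz)).2
            · exact h5 y hy' z hz

lemma bipRamsey {V : Type} (G : SimpleGraph V) (k : ℕ) (L R : Finset V)
    (hL : k + k ≤ L.card) (hR : k * 2^(k+k) ≤ R.card) :
    ∃ L' R', L' ⊆ L ∧ R' ⊆ R ∧ L'.card = k ∧ R'.card = k ∧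
      ((∀ x ∈ L', ∀ y ∈ R', G.Adj x y) ∨ (∀ x ∈ L', ∀ y ∈ R', ¬ G.Adj x y)) := by
  rcases bip_aux G k (k+k) k k le_rfl L R hL hR with
    ⟨L', R', h1, h2, h3, h4, h5⟩ | ⟨L', R', h1, h2, h3, h4, h5⟩ <;>
    obtain ⟨R'', hsub, hc⟩ := Finset.exists_subset_card_eq h4
  · exact ⟨L', R'', h1, hsub.trans h2, h3, hc,
      Or.inl fun x hx y hy => h5 x hx y (hsub hy)⟩
  · exact ⟨L', R'', h1, hsub.trans h2, h3, hc,
      Or.inr fun x hx y hy => h5 x hx y (hsub hy)⟩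

variable {k : ℕ} {i j : Fin k}

lemma S1 : (Sgraph k).Adj (Sum.inl i) (Sum.inl j) ↔ i ≠ j := by
  simp [Sgraph]
lemma S2 : ¬ (Sgraph k).Adj (Sum.inl i) (Sum.inr j) := by simp [Sgraph]
lemma S3 : ¬ (Sgraph k).Adj (Sum.inr i) (Sum.inl j) := by simp [Sgraph]
lemma S4 : ¬ (Sgraph k).Adj (Sum.inr i) (Sum.inr j) := by simp [Sgraph]

lemma CB1 : ¬ (completeBipartiteGraph (Fin k) (Fin k)).Adj (Sum.inl i) (Sum.inl j) := by simp
lemma CB2 : (completeBipartiteGraph (Fin k) (Fin k)).Adj (Sum.inl i) (Sum.inr j) := by simp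
lemma CB3 : (completeBipartiteGraph (Fin k) (Fin k)).Adj (Sum.inr i) (Sum.inl j) := by simp
lemma CB4 : ¬ (completeBipartiteGraph (Fin k) (Fin k)).Adj (Sum.inr i) (Sum.inr j) := by simp

lemma Q1 : ¬ (Qgraph k).Adj (Sum.inl (Sum.inl ())) (Sum.inl (Sum.inl ())) :=
  (Qgraph k).irrefl
lemma Q2 : (Qgraph k).Adj (Sum.inl (Sum.inl ())) (Sum.inl (Sum.inr i)) := by
  simp [Qgraph]
lemma Q3 : ¬ (Qgraph k).Adj (Sum.inl (Sum.inl ())) (Sum.inr i) := by simp [Qgraph]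
lemma Q4 : (Qgraph k).Adj (Sum.inl (Sum.inr i)) (Sum.inl (Sum.inl ())) := Q2.symm
lemma Q5 : ¬ (Qgraph k).Adj (Sum.inl (Sum.inr i)) (Sum.inl (Sum.inr j)) := by
  simp [Qgraph]
lemma Q6 : ¬ (Qgraph k).Adj (Sum.inl (Sum.inr i)) (Sum.inr j) := by simp [Qgraph]
lemma Q7 : ¬ (Qgraph k).Adj (Sum.inr i) (Sum.inl (Sum.inl ())) := by simp [Qgraph]
lemma Q8 : ¬ (Qgraph k).Adj (Sum.inr i) (Sum.inl (Sum.inr j)) := by simp [Qgraph]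
lemma Q9 : ¬ (Qgraph k).Adj (Sum.inr i) (Sum.inr j) := by simp [Qgraph]

lemma embS {V : Type} (G : SimpleGraph V) (k : ℕ) (C I : Finset V)
    (hC : C.card = k) (hI : I.card = k)
    (hdisj : ∀ x ∈ C, x ∉ I)
    (hCadj : ∀ x ∈ C, ∀ y ∈ C, x ≠ y → G.Adj x y)
    (hIind : ∀ x ∈ I, ∀ y ∈ I, ¬ G.Adj x y)
    (hcross : ∀ x ∈ C, ∀ y ∈ I, ¬ G.Adj x y) : Nonempty (Sgraph k ↪g G) := by
  classical
  set c : Fin k → V := fun i => ((Finset.equivFinOfCardEq hC).symm i : V) with hcdef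
  set d : Fin k → V := fun i => ((Finset.equivFinOfCardEq hI).symm i : V) with hddef
  have hcmem : ∀ i, c i ∈ C := fun i => ((Finset.equivFinOfCardEq hC).symm i).2
  have hdmem : ∀ i, d i ∈ I := fun i => ((Finset.equivFinOfCardEq hI).symm i).2
  have hcinj : Function.Injective c := fun i j h =>
    (Finset.equivFinOfCardEq hC).symm.injective (Subtype.ext h)
  have hdinj : Function.Injective d := fun i j h =>
    (Finset.equivFinOfCardEq hI).symm.injective (Subtype.ext h)
  have hcd : ∀ i j, c i ≠ d j := fun i j h => hdisj _ (hcmem i) (h ▸ hdmem j)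
  refine ⟨⟨⟨Sum.elim c d, ?_⟩, ?_⟩⟩
  · refine id (α := Function.Injective _) ?_; rintro (i|i) (j|j) h <;> simp only [Sum.elim_inl, Sum.elim_inr] at h
    · rw [hcinj h]
    · exact absurd h (hcd i j)
    · exact absurd h.symm (hcd j i)
    · rw [hdinj h]
  · rintro (i|i) (j|j) <;>
      simp only [Function.Embedding.coeFn_mk, Sum.elim_inl, Sum.elim_inr]
    · rw [S1]
      exact ⟨fun h e => by subst e; exact G.irrefl h,
        fun hij => hCadj _ (hcmem i) _ (hcmem j) (fun e => hij (hcinj e))⟩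
    · exact iff_of_false (hcross _ (hcmem i) _ (hdmem j)) S2
    · exact iff_of_false (fun h => hcross _ (hcmem j) _ (hdmem i) h.symm) S3
    · exact iff_of_false (hIind _ (hdmem i) _ (hdmem j)) S4

lemma embCB {V : Type} (G : SimpleGraph V) (k : ℕ) (A B : Finset V)
    (hA : A.card = k) (hB : B.card = k)
    (hdisj : ∀ x ∈ A, x ∉ B)
    (hAind : ∀ x ∈ A, ∀ y ∈ A, ¬ G.Adj x y)
    (hBind : ∀ x ∈ B, ∀ y ∈ B, ¬ G.Adj x y)
    (hcross : ∀ x ∈ A, ∀ y ∈ B, G.Adj x y) :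
    Nonempty (completeBipartiteGraph (Fin k) (Fin k) ↪g G) := by
  classical
  set c : Fin k → V := fun i => ((Finset.equivFinOfCardEq hA).symm i : V) with hcdef
  set d : Fin k → V := fun i => ((Finset.equivFinOfCardEq hB).symm i : V) with hddef
  have hcmem : ∀ i, c i ∈ A := fun i => ((Finset.equivFinOfCardEq hA).symm i).2
  have hdmem : ∀ i, d i ∈ B := fun i => ((Finset.equivFinOfCardEq hB).symm i).2
  have hcinj : Function.Injective c := fun i j h =>
    (Finset.equivFinOfCardEq hA).symm.injective (Subtype.ext h)
  have hdinj : Function.Injective d := fun i j h =>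
    (Finset.equivFinOfCardEq hB).symm.injective (Subtype.ext h)
  have hcd : ∀ i j, c i ≠ d j := fun i j h => hdisj _ (hcmem i) (h ▸ hdmem j)
  refine ⟨⟨⟨Sum.elim c d, ?_⟩, ?_⟩⟩
  · refine id (α := Function.Injective _) ?_; rintro (i|i) (j|j) h <;> simp only [Sum.elim_inl, Sum.elim_inr] at h
    · rw [hcinj h]
    · exact absurd h (hcd i j)
    · exact absurd h.symm (hcd j i)
    · rw [hdinj h]
  · rintro (i|i) (j|j) <;>
      simp only [Function.Embedding.coeFn_mk, Sum.elim_inl, Sum.elim_inr]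
    · exact iff_of_false (hAind _ (hcmem i) _ (hcmem j)) CB1
    · exact iff_of_true (hcross _ (hcmem i) _ (hdmem j)) CB2
    · exact iff_of_true (hcross _ (hcmem j) _ (hdmem i)).symm CB3
    · exact iff_of_false (hBind _ (hdmem i) _ (hdmem j)) CB4

lemma embQ {V : Type} (G : SimpleGraph V) (k : ℕ) (v : V) (A B : Finset V)
    (hA : A.card = k) (hB : B.card = k)
    (hdisj : ∀ x ∈ A, x ∉ B)
    (hvA : ∀ x ∈ A, G.Adj v x)
    (hvB : ∀ x ∈ B, x ≠ v ∧ ¬ G.Adj v x)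
    (hAind : ∀ x ∈ A, ∀ y ∈ A, ¬ G.Adj x y)
    (hBind : ∀ x ∈ B, ∀ y ∈ B, ¬ G.Adj x y)
    (hcross : ∀ x ∈ A, ∀ y ∈ B, ¬ G.Adj x y) : Nonempty (Qgraph k ↪g G) := by
  classical
  set c : Fin k → V := fun i => ((Finset.equivFinOfCardEq hA).symm i : V) with hcdef
  set d : Fin k → V := fun i => ((Finset.equivFinOfCardEq hB).symm i : V) with hddef
  have hcmem : ∀ i, c i ∈ A := fun i => ((Finset.equivFinOfCardEq hA).symm i).2
  have hdmem : ∀ i, d i ∈ B := fun i => ((Finset.equivFinOfCardEq hB).symm i).2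
  have hcinj : Function.Injective c := fun i j h =>
    (Finset.equivFinOfCardEq hA).symm.injective (Subtype.ext h)
  have hdinj : Function.Injective d := fun i j h =>
    (Finset.equivFinOfCardEq hB).symm.injective (Subtype.ext h)
  have hcd : ∀ i j, c i ≠ d j := fun i j h => hdisj _ (hcmem i) (h ▸ hdmem j)
  have hvc : ∀ i, v ≠ c i := fun i => (hvA _ (hcmem i)).ne
  have hvd : ∀ i, v ≠ d i := fun i h => (hvB _ (hdmem i)).1 h.symm
  refine ⟨⟨⟨Sum.elim (Sum.elim (fun _ => v) c) d, ?_⟩, ?_⟩⟩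
  · refine id (α := Function.Injective _) ?_; rintro ((⟨⟩|i)|i) ((⟨⟩|j)|j) h <;>
      simp only [Sum.elim_inl, Sum.elim_inr] at h
    · rfl
    · exact absurd h (hvc j)
    · exact absurd h (hvd j)
    · exact absurd h.symm (hvc i)
    · rw [hcinj h]
    · exact absurd h (hcd i j)
    · exact absurd h.symm (hvd i)
    · exact absurd h.symm (hcd j i)
    · rw [hdinj h]
  · rintro ((⟨⟩|i)|i) ((⟨⟩|j)|j) <;>
      simp only [Function.Embedding.coeFn_mk, Sum.elim_inl, Sum.elim_inr]
    · exact iff_of_false (G.irrefl) Q1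
    · exact iff_of_true (hvA _ (hcmem j)) Q2
    · exact iff_of_false ((hvB _ (hdmem j)).2) Q3
    · exact iff_of_true (hvA _ (hcmem i)).symm Q4
    · exact iff_of_false (hAind _ (hcmem i) _ (hcmem j)) Q5
    · exact iff_of_false (hcross _ (hcmem i) _ (hdmem j)) Q6
    · exact iff_of_false (fun h => (hvB _ (hdmem i)).2 h.symm) Q7
    · exact iff_of_false (fun h => hcross _ (hcmem j) _ (hdmem i) h.symm) Q8
    · exact iff_of_false (hBind _ (hdmem i) _ (hdmem j)) Q9

/-- For every positive `k` there is `N` such that every graph with a vertex having at least `N`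
neighbours and at least `N` non-neighbours contains one of `S_k`, `co-S_k`, `Q_k`, `co-Q_k`,
`K_{k,k}`, `co-K_{k,k}` as an induced subgraph. -/
theorem complex_degree_unavoidable (k : ℕ) (hk : 0 < k) :
    ∃ N : ℕ, ∀ (V : Type) (G : SimpleGraph V),
      (∃ (v : V) (Nb Nnb : Finset V),
        N ≤ Nb.card ∧ N ≤ Nnb.card ∧
        (∀ u ∈ Nb, G.Adj v u) ∧ (∀ u ∈ Nnb, u ≠ v ∧ ¬ G.Adj v u)) →
      Nonempty (Sgraph k ↪g G) ∨ Nonempty ((Sgraph k)ᶜ ↪g G) ∨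
      Nonempty (Qgraph k ↪g G) ∨ Nonempty ((Qgraph k)ᶜ ↪g G) ∨
      Nonempty (completeBipartiteGraph (Fin k) (Fin k) ↪g G) ∨
      Nonempty ((completeBipartiteGraph (Fin k) (Fin k))ᶜ ↪g G) := by
  classical
  refine ⟨(k * 2^(k+k) + k * 2^(k+k)).choose (k * 2^(k+k)), ?_⟩
  rintro V G ⟨v, A, B, hA, hB, hAv, hBv⟩
  set m := k * 2^(k+k) with hm
  have h2k : k + k ≤ m := by
    have h2 : (2:ℕ) ≤ 2^(k+k) := by
      calc (2:ℕ) = 2^1 := rfl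
        _ ≤ 2^(k+k) := Nat.pow_le_pow_right (by norm_num) (by omega)
    calc k + k = k * 2 := by ring
      _ ≤ k * 2^(k+k) := Nat.mul_le_mul_left k h2
  have hdisjAB : ∀ x ∈ A, x ∉ B := fun x hxA hxB => (hBv x hxB).2 (hAv x hxA)
  rcases ramsey_aux G (m+m) m m le_rfl A hA with
      ⟨P, hPs, hPc, hPadj⟩ | ⟨P, hPs, hPc, hPind⟩ <;>
    rcases ramsey_aux G (m+m) m m le_rfl B hB with
      ⟨Q, hQs, hQc, hQadj⟩ | ⟨Q, hQs, hQc, hQind⟩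
  · -- clique in A, clique in B
    obtain ⟨L', R', hl1, hl2, hl3, hl4, hor⟩ :=
      bipRamsey G k P Q (by rw [hPc]; exact h2k) (le_of_eq hQc.symm)
    have hL'A : ∀ x ∈ L', x ∈ A := fun x hx => hPs (hl1 hx)
    have hR'B : ∀ x ∈ R', x ∈ B := fun x hx => hQs (hl2 hx)
    rcases hor with hadj | hnon
    · -- co-Q
      refine Or.inr (Or.inr (Or.inr (Or.inl ?_)))
      obtain ⟨e⟩ := embQ Gᶜ k v R' L' hl4 hl3
        (fun x hx hxL => hdisjAB _ (hL'A _ hxL) (hR'B _ hx))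
        (fun x hx => SimpleGraph.compl_adj G v x |>.mpr
          ⟨(hBv x (hR'B x hx)).1.symm, (hBv x (hR'B x hx)).2⟩)
        (fun x hx => ⟨(hAv x (hL'A x hx)).ne', fun h => h.2 (hAv x (hL'A x hx))⟩)
        (fun x hx y hy h => h.2 (hQadj x (hl2 hx) y (hl2 hy) h.1))
        (fun x hx y hy h => h.2 (hPadj x (hl1 hx) y (hl1 hy) h.1))
        (fun x hx y hy h => h.2 ((hadj y hy x hx).symm))
      exact ⟨embOfCompl e⟩
    · -- co-K_{k,k}
      refine Or.inr (Or.inr (Or.inr (Or.inr (Or.inr ?_))))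
      obtain ⟨e⟩ := embCB Gᶜ k L' R' hl3 hl4
        (fun x hx hxR => hdisjAB _ (hL'A _ hx) (hR'B _ hxR))
        (fun x hx y hy h => h.2 (hPadj x (hl1 hx) y (hl1 hy) h.1))
        (fun x hx y hy h => h.2 (hQadj x (hl2 hx) y (hl2 hy) h.1))
        (fun x hx y hy => ⟨fun he => hdisjAB _ (hL'A _ hx) (he ▸ hR'B _ hy),
          hnon x hx y hy⟩)
      exact ⟨embOfCompl e⟩
  · -- clique in A, independent in B
    obtain ⟨L', R', hl1, hl2, hl3, hl4, hor⟩ :=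
      bipRamsey G k P Q (by rw [hPc]; exact h2k) (le_of_eq hQc.symm)
    have hL'A : ∀ x ∈ L', x ∈ A := fun x hx => hPs (hl1 hx)
    have hR'B : ∀ x ∈ R', x ∈ B := fun x hx => hQs (hl2 hx)
    rcases hor with hadj | hnon
    · -- co-S
      refine Or.inr (Or.inl ?_)
      obtain ⟨e⟩ := embS Gᶜ k R' L' hl4 hl3
        (fun x hx hxL => hdisjAB _ (hL'A _ hxL) (hR'B _ hx))
        (fun x hx y hy hxy => ⟨hxy, hQind x (hl2 hx) y (hl2 hy)⟩)
        (fun x hx y hy h => h.2 (hPadj x (hl1 hx) y (hl1 hy) h.1))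
        (fun x hx y hy h => h.2 ((hadj y hy x hx).symm))
      exact ⟨embOfCompl e⟩
    · -- S
      exact Or.inl (embS G k L' R' hl3 hl4
        (fun x hx hxR => hdisjAB _ (hL'A _ hx) (hR'B _ hxR))
        (fun x hx y hy hxy => hPadj x (hl1 hx) y (hl1 hy) hxy)
        (fun x hx y hy => hQind x (hl2 hx) y (hl2 hy))
        hnon)
  · -- independent in A, clique in B
    obtain ⟨L', R', hl1, hl2, hl3, hl4, hor⟩ :=
      bipRamsey G k Q P (by rw [hQc]; exact h2k) (le_of_eq hPc.symm)
    have hL'B : ∀ x ∈ L', x ∈ B := fun x hx => hQs (hl1 hx)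
    have hR'A : ∀ x ∈ R', x ∈ A := fun x hx => hPs (hl2 hx)
    rcases hor with hadj | hnon
    · -- co-S
      refine Or.inr (Or.inl ?_)
      obtain ⟨e⟩ := embS Gᶜ k R' L' hl4 hl3
        (fun x hx hxL => hdisjAB _ (hR'A _ hx) (hL'B _ hxL))
        (fun x hx y hy hxy => ⟨hxy, hPind x (hl2 hx) y (hl2 hy)⟩)
        (fun x hx y hy h => h.2 (hQadj x (hl1 hx) y (hl1 hy) h.1))
        (fun x hx y hy h => h.2 ((hadj y hy x hx).symm))
      exact ⟨embOfCompl e⟩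
    · -- S
      exact Or.inl (embS G k L' R' hl3 hl4
        (fun x hx hxR => hdisjAB _ (hR'A _ hxR) (hL'B _ hx))
        (fun x hx y hy hxy => hQadj x (hl1 hx) y (hl1 hy) hxy)
        (fun x hx y hy => hPind x (hl2 hx) y (hl2 hy))
        hnon)
  · -- independent in A, independent in B
    obtain ⟨L', R', hl1, hl2, hl3, hl4, hor⟩ :=
      bipRamsey G k P Q (by rw [hPc]; exact h2k) (le_of_eq hQc.symm)
    have hL'A : ∀ x ∈ L', x ∈ A := fun x hx => hPs (hl1 hx)
    have hR'B : ∀ x ∈ R', x ∈ B := fun x hx => hQs (hl2 hx)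
    rcases hor with hadj | hnon
    · -- K_{k,k}
      refine Or.inr (Or.inr (Or.inr (Or.inr (Or.inl ?_))))
      exact embCB G k L' R' hl3 hl4
        (fun x hx hxR => hdisjAB _ (hL'A _ hx) (hR'B _ hxR))
        (fun x hx y hy => hPind x (hl1 hx) y (hl1 hy))
        (fun x hx y hy => hQind x (hl2 hx) y (hl2 hy))
        hadj
    · -- Q
      refine Or.inr (Or.inr (Or.inl ?_))
      exact embQ G k v L' R' hl3 hl4
        (fun x hx hxR => hdisjAB _ (hL'A _ hx) (hR'B _ hxR))
        (fun x hx => hAv x (hL'A x hx))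
        (fun x hx => hBv x (hR'B x hx))
        (fun x hx y hy => hPind x (hl1 hx) y (hl1 hy))
        (fun x hx y hy => hQind x (hl2 hx) y (hl2 hy))
        hnon
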